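/- Let a > -1, b > 0, c > 0 be real numbers with c > (a+1)/b, and let 0 < r ≤ 1. Then for every ε ∈ (0,1], ∫₀^r u^{2a+1}/(u^{2b} + ε²)^c du ≥ ε^{-2(c - (a+1)/b)} · ∫₀^r v^{2a+1}/(v^{2b} + 1)^c dv. -/

import Mathlib

open MeasureTheory intervalIntegral

theorem stmt_4 (a b c r : ℝ) (ha : -1 < a) (hb : 0 < b) (hc : 0 < c)
    (hcrit : (a + 1) / b < c) (hr0 : 0 < r) (hr1 : r ≤ 1) :
    ∀ ε ∈ Set.Ioc (0:ℝ) 1,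
      ε ^ (-2 * (c - (a + 1) / b)) * ∫ v in (0:ℝ)..r, v ^ (2*a+1) / (v ^ (2*b) + 1) ^ c
        ≤ ∫ u in (0:ℝ)..r, u ^ (2*a+1) / (u ^ (2*b) + ε ^ 2) ^ c := by
  rintro ε ⟨hε0, hε1⟩
  set δ := ε ^ (b⁻¹) with hδdef
  have hδ0 : 0 < δ := Real.rpow_pos_of_pos hε0 _
  have hδ1 : δ ≤ 1 := Real.rpow_le_one hε0.le hε1 (by positivity)
  set f : ℝ → ℝ := fun u => u ^ (2*a+1) / (u ^ (2*b) + ε ^ 2) ^ c with hf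
  have hεsq : (0:ℝ) < ε ^ 2 := by positivity
  -- nonnegativity of f on [0, ∞)
  have hfnn : ∀ u : ℝ, 0 ≤ u → 0 ≤ f u := by
    intro u hu
    apply div_nonneg (Real.rpow_nonneg hu _)
    exact Real.rpow_nonneg (by positivity) _
  -- integrability of f on [0, r]
  have hfint : IntervalIntegrable f volume 0 r := by
    have hmeas : AEStronglyMeasurable f (volume.restrict (Set.uIoc 0 r)) := by
      apply Measurable.aestronglyMeasurable
      fun_prop
    have hdom : IntervalIntegrable (fun u => ((ε^2)^c)⁻¹ * u ^ (2*a+1)) volume 0 r :=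
      (intervalIntegrable_rpow' (by linarith)).const_mul _
    refine hdom.mono_fun hmeas ?_
    filter_upwards [ae_restrict_mem measurableSet_uIoc] with u hu
    rw [Set.uIoc_of_le hr0.le] at hu
    have hu0 : 0 < u := hu.1
    rw [Real.norm_eq_abs, Real.norm_eq_abs, abs_of_nonneg (hfnn u hu0.le),
      abs_of_nonneg (by positivity)]
    have hden : (ε^2)^c ≤ (u ^ (2*b) + ε ^ 2) ^ c := by
      apply Real.rpow_le_rpow (by positivity) _ hc.le
      have : 0 ≤ u ^ (2*b) := Real.rpow_nonneg hu0.le _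
      linarith
    calc f u ≤ u ^ (2*a+1) / (ε^2)^c := by
          apply div_le_div_of_nonneg_left (Real.rpow_nonneg hu0.le _) (by positivity) hden
      _ = ((ε^2)^c)⁻¹ * u ^ (2*a+1) := by ring
  -- key pointwise identity
  have hkey : ∀ v : ℝ, 0 < v →
      ε ^ (-2 * (c - (a + 1) / b)) * (v ^ (2*a+1) / (v ^ (2*b) + 1) ^ c)
        = δ * f (δ * v) := by
    intro v hv
    have h1 : (δ * v) ^ (2*a+1) = δ ^ (2*a+1) * v ^ (2*a+1) :=
      Real.mul_rpow hδ0.le hv.le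
    have h2 : (δ * v) ^ (2*b) = ε ^ 2 * v ^ (2*b) := by
      rw [Real.mul_rpow hδ0.le hv.le, hδdef, ← Real.rpow_natCast ε 2,
        ← Real.rpow_mul hε0.le]
      congr 1
      field_simp
      norm_num
    have h3 : (δ * v) ^ (2*b) + ε ^ 2 = ε ^ 2 * (v ^ (2*b) + 1) := by
      rw [h2]; ring
    have h4 : ((δ * v) ^ (2*b) + ε ^ 2) ^ c = (ε^2)^c * (v ^ (2*b) + 1) ^ c := by
      rw [h3, Real.mul_rpow hεsq.le (by positivity)]
    have h5 : δ * δ ^ (2*a+1) = ε ^ ((2*a+2) * b⁻¹) := by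
      have h5a : δ ^ (1 + (2*a+1)) = δ * δ ^ (2*a+1) := by
        rw [Real.rpow_add hδ0, Real.rpow_one]
      rw [← h5a, hδdef, ← Real.rpow_mul hε0.le]
      congr 1
      ring
    have h6 : ε ^ (-2 * (c - (a + 1) / b)) = ε ^ ((2*a+2) * b⁻¹) * ε ^ ((-2) * c) := by
      rw [← Real.rpow_add hε0]
      congr 1
      field_simp
      ring
    have h7 : (ε^2)^c = ε ^ (2 * c) := by
      rw [← Real.rpow_natCast ε 2, ← Real.rpow_mul hε0.le]
      norm_num
    have hv1 : (0:ℝ) < (v ^ (2*b) + 1) ^ c := by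
      have : 0 ≤ v ^ (2*b) := Real.rpow_nonneg hv.le _
      positivity
    have hεc : (0:ℝ) < ε ^ (2*c) := Real.rpow_pos_of_pos hε0 _
    rw [hf]
    simp only
    rw [h1, h4, h6, h7]
    rw [show δ * (δ ^ (2*a+1) * v ^ (2*a+1) / (ε ^ (2*c) * (v ^ (2*b) + 1) ^ c))
        = (δ * δ ^ (2*a+1)) * (v ^ (2*a+1) / (v ^ (2*b) + 1) ^ c) * (ε ^ (2*c))⁻¹ by
      field_simp]
    rw [h5, ← Real.rpow_neg hε0.le]
    ring_nf
  -- substitution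
  have hsub : δ • (∫ v in (0:ℝ)..r, f (δ * v)) = ∫ u in (0:ℝ)..(δ * r), f u := by
    simpa using intervalIntegral.smul_integral_comp_mul_left f δ

  have hcongr : (∫ v in (0:ℝ)..r, ε ^ (-2 * (c - (a + 1) / b)) * (v ^ (2*a+1) / (v ^ (2*b) + 1) ^ c))
      = ∫ v in (0:ℝ)..r, δ * f (δ * v) := by
    apply intervalIntegral.integral_congr_ae
    rw [Set.uIoc_of_le hr0.le]
    exact Filter.Eventually.of_forall (fun v hv => hkey v hv.1)
  have hLHS : ε ^ (-2 * (c - (a + 1) / b)) * ∫ v in (0:ℝ)..r, v ^ (2*a+1) / (v ^ (2*b) + 1) ^ c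
      = ∫ u in (0:ℝ)..(δ * r), f u := by
    rw [← intervalIntegral.integral_const_mul, hcongr,
      intervalIntegral.integral_const_mul, ← smul_eq_mul, hsub]
  rw [hLHS]
  -- monotonicity in the upper limit
  have hδr : δ * r ≤ r := by nlinarith
  have hδr0 : 0 ≤ δ * r := by positivity
  have hint1 : IntervalIntegrable f volume 0 (δ * r) :=
    hfint.mono_set (by rw [Set.uIcc_of_le hδr0, Set.uIcc_of_le hr0.le]; exact Set.Icc_subset_Icc le_rfl hδr)
  have hint2 : IntervalIntegrable f volume (δ * r) r :=
    hfint.mono_set (by rw [Set.uIcc_of_le hδr, Set.uIcc_of_le hr0.le]; exact Set.Icc_subset_Icc hδr0 le_rfl)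
  have := intervalIntegral.integral_add_adjacent_intervals hint1 hint2
  have hnn : 0 ≤ ∫ u in (δ * r)..r, f u :=
    intervalIntegral.integral_nonneg hδr (fun u hu => hfnn u (le_trans hδr0 hu.1))
  linarith
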